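/- For n = 64 (so m = 32), with g the IOBC permutation shifting the left 31 bits and right 33 bits cyclically by 1, the number of 64-bit strings X with g^341(X) = X is 2^42; hence a uniformly random 64-bit string satisfies g^341(X) = X with probability 2^{-22}. -/

import Mathlib

/-- Right cyclic shift by 1 of a bit-string of length `k`. -/
def cshift {k : ℕ} (f : ZMod k → Bool) : ZMod k → Bool := fun i => f (i - 1)

/-- The IOBC function `g` for `n = 64` (`m = 32`), acting on 64-bit strings split into
the leftmost 31 bits and rightmost 33 bits by independent right cyclic shifts by 1. -/
def g64 : (ZMod 31 → Bool) × (ZMod 33 → Bool) → (ZMod 31 → Bool) × (ZMod 33 → Bool) :=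
  fun X => (cshift X.1, cshift X.2)

lemma cshift_iter {k : ℕ} (f : ZMod k → Bool) (n : ℕ) :
    cshift^[n] f = fun i => f (i - n) := by
  induction n with
  | zero => simp
  | succ n ih =>
    funext i
    rw [Function.iterate_succ_apply']
    show (cshift^[n] f) (i - 1) = f (i - ((n + 1 : ℕ) : ZMod k))
    rw [ih]
    push_cast
    ring_nf

lemma g64_iter (X : (ZMod 31 → Bool) × (ZMod 33 → Bool)) (n : ℕ) :
    g64^[n] X = (cshift^[n] X.1, cshift^[n] X.2) := by
  induction n with
  | zero => simp
  | succ n ih =>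
    rw [Function.iterate_succ_apply', ih, Function.iterate_succ_apply',
      Function.iterate_succ_apply']
    rfl

lemma fixed_iff (X : (ZMod 31 → Bool) × (ZMod 33 → Bool)) :
    g64^[341] X = X ↔ (fun i => X.2 (i - 11)) = X.2 := by
  rw [g64_iter, cshift_iter, cshift_iter, Prod.ext_iff]
  have h31 : ((341 : ℕ) : ZMod 31) = 0 := by decide
  have h33 : ((341 : ℕ) : ZMod 33) = 11 := by decide
  rw [h31, h33]
  simp

abbrev phi : ZMod 33 →+* ZMod 11 := ZMod.castHom (show (11:ℕ) ∣ 33 by norm_num) (ZMod 11)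

lemma phi_val (i : ZMod 33) : (phi i).val = i.val % 11 := by
  have h : phi i = ((i.val : ℕ) : ZMod 11) := by
    simp [phi, ZMod.natCast_val]
  rw [h, ZMod.val_natCast]

lemma periodic_apply {X2 : ZMod 33 → Bool} (h : (fun i => X2 (i - 11)) = X2)
    (r : ZMod 33) (k : ℕ) : X2 (r + 11 * k) = X2 r := by
  induction k with
  | zero => simp
  | succ k ih =>
    have h1 := congrFun h (r + 11 * ((k : ZMod 33) + 1))
    have e : r + 11 * ((k : ZMod 33) + 1) - 11 = r + 11 * k := by ring
    rw [e] at h1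
    push_cast
    rw [← h1, ih]

lemma periodic_rep {X2 : ZMod 33 → Bool} (h : (fun i => X2 (i - 11)) = X2)
    (i : ZMod 33) : X2 (((phi i).val : ZMod 33)) = X2 i := by
  have hv : i.val = (phi i).val + 11 * (i.val / 11) := by
    rw [phi_val]; omega
  have key : ((phi i).val : ZMod 33) + 11 * ((i.val / 11 : ℕ) : ZMod 33) = i := by
    calc ((phi i).val : ZMod 33) + 11 * ((i.val / 11 : ℕ) : ZMod 33)
        = (((phi i).val + 11 * (i.val / 11) : ℕ) : ZMod 33) := by push_cast; ring
      _ = ((i.val : ℕ) : ZMod 33) := by rw [← hv]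
      _ = i := by rw [ZMod.natCast_val, ZMod.cast_id]
  conv_rhs => rw [← key]
  exact (periodic_apply h _ _).symm

def fixedEquiv : {X : (ZMod 31 → Bool) × (ZMod 33 → Bool) // g64^[341] X = X} ≃
    (ZMod 31 → Bool) × (ZMod 11 → Bool) where
  toFun X := (X.1.1, fun j => X.1.2 ((j.val : ZMod 33)))
  invFun p := ⟨(p.1, fun i => p.2 (phi i)), by
    rw [fixed_iff]
    funext i
    simp only [map_sub]
    have h11 : phi (11 : ZMod 33) = 0 := by decide
    rw [h11, sub_zero]⟩
  left_inv X := by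
    obtain ⟨⟨X1, X2⟩, hX⟩ := X
    rw [fixed_iff] at hX
    ext i
    · rfl
    · exact periodic_rep hX i
  right_inv p := by
    ext j
    · rfl
    · show p.2 (phi ((j.val : ZMod 33))) = p.2 j
      rw [map_natCast, ZMod.natCast_val, ZMod.cast_id]

theorem g64_iterate_341_fixed_count :
    Fintype.card {X : (ZMod 31 → Bool) × (ZMod 33 → Bool) // g64^[341] X = X} = 2 ^ 42 ∧
    (Fintype.card {X : (ZMod 31 → Bool) × (ZMod 33 → Bool) // g64^[341] X = X} : ℚ) / 2 ^ 64
      = 1 / 2 ^ 22 := by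
  have hcard : Fintype.card {X : (ZMod 31 → Bool) × (ZMod 33 → Bool) // g64^[341] X = X}
      = 2 ^ 42 := by
    rw [Fintype.card_congr fixedEquiv, Fintype.card_prod, Fintype.card_fun, Fintype.card_fun,
      ZMod.card, ZMod.card, Fintype.card_bool]
    norm_num
  refine ⟨hcard, ?_⟩
  rw [hcard]
  norm_num
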